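/- Let K ≥ 2, let n_1, …, n_K be integers with n_k ≥ K for every k, set n = n_1 + ⋯ + n_K, and for each k let L_k be an n_k×n_k real symmetric positive semidefinite matrix with L_k·1_{n_k} = 0, with eigenvalues λ_1(L_k) ≤ ⋯ ≤ λ_{n_k}(L_k) in increasing order. Let p ≥ 0. Then there exists X ∈ ℝ^{n×(K−1)} with Xᵀ X = I_{K−1} and Xᵀ 1_n = 0 such that, writing X = [X_1ᵀ, …, X_Kᵀ]ᵀ with blocks X_k ∈ ℝ^{n_k×(K−1)}, Σ_{k=1}^{K} trace(X_kᵀ L_k X_k) + p·Σ_{k=1}^{K} (n − n_k)·trace(X_kᵀ X_k) ≤ min_{k∈{1,…,K}} [ Σ_{i=2}^{K} λ_i(L_k) + (K−1)·p·(n − n_k) ]. -/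

import Mathlib

open Matrix BigOperators

/-- The `k`-th row block of a matrix whose rows are indexed by the sigma type
`(k : Fin K) × Fin (nk k)`. -/
def blockOf {K d : ℕ} {nk : Fin K → ℕ}
    (X : Matrix ((k : Fin K) × Fin (nk k)) (Fin d) ℝ) (k : Fin K) :
    Matrix (Fin (nk k)) (Fin d) ℝ :=
  Matrix.of fun i j => X ⟨k, i⟩ j

open Module in

lemma core (n K : ℕ) (hK : 2 ≤ K) (hn : K ≤ n) (Lm : Matrix (Fin n) (Fin n) ℝ)
    (hPSD : Lm.PosSemidef) (hL1 : Lm.mulVec (fun _ => (1:ℝ)) = 0)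
    (μ : Fin n → ℝ) (hμ : Monotone μ)
    (U : Matrix (Fin n) (Fin n) ℝ) (hU : Uᵀ*U = 1)
    (hdec : Lm = U * Matrix.diagonal μ * Uᵀ) :
    ∃ x : Fin (K-1) → (Fin n → ℝ),
      (∀ j j', x j ⬝ᵥ x j' = if j = j' then 1 else 0) ∧
      (∀ j, x j ⬝ᵥ (fun _ => (1:ℝ)) = 0) ∧
      (∀ j, x j ⬝ᵥ Lm.mulVec (x j)
        = μ ⟨(j:ℕ)+1, by have := j.isLt; omega⟩) := by
  classical
  set idx : Fin (K-1) → Fin n := fun j => ⟨(j:ℕ)+1, by have := j.isLt; omega⟩ with hidx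
  set u : Fin n → (Fin n → ℝ) := fun i a => U a i with hu
  have huu : ∀ i i', u i ⬝ᵥ u i' = if i = i' then 1 else 0 := by
    intro i i'
    have := congrFun (congrFun hU i) i'
    simpa [Matrix.mul_apply, Matrix.one_apply, dotProduct, hu,
      Matrix.transpose_apply] using this
  have hLU : Lm * U = U * Matrix.diagonal μ := by
    rw [hdec, Matrix.mul_assoc, Matrix.mul_assoc, hU, Matrix.mul_one]
  have hEig : ∀ i, Lm.mulVec (u i) = μ i • u i := by
    intro i
    funext a
    have h1 : (Lm * U) a i = (U * Matrix.diagonal μ) a i := congrFun (congrFun hLU a) i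
    rw [Matrix.mul_diagonal] at h1
    simp only [Matrix.mul_apply] at h1
    simpa [Matrix.mulVec, dotProduct, hu, mul_comm] using h1
  have hsym : Lmᵀ = Lm := by
    have := hPSD.1
    rwa [Matrix.IsHermitian, Matrix.conjTranspose_eq_transpose_of_trivial] at this
  have hsymdot : ∀ x y : Fin n → ℝ, x ⬝ᵥ Lm.mulVec y = (Lm.mulVec x) ⬝ᵥ y := by
    intro x y
    rw [Matrix.dotProduct_mulVec]
    conv_lhs => rw [← hsym, Matrix.vecMul_transpose]
  have hμ0 : ∀ i, 0 ≤ μ i := by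
    intro i
    have h := hPSD.dotProduct_mulVec_nonneg (u i)
    rw [hEig i] at h
    have hd : u i ⬝ᵥ (μ i • u i) = μ i := by
      rw [dotProduct_smul]
      simp [huu i i]
    simpa [hd] using h
  have hones : ∀ i, 0 < μ i → u i ⬝ᵥ (fun _ => (1:ℝ)) = 0 := by
    intro i hi
    have h2 : (Lm.mulVec (u i)) ⬝ᵥ (fun _ => (1:ℝ)) = 0 := by
      rw [← hsymdot, hL1]
      simp
    rw [hEig i, smul_dotProduct, smul_eq_mul] at h2
    exact (mul_eq_zero.mp h2).resolve_left hi.ne'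
  -- Euclidean space setup
  set onesV : EuclideanSpace ℝ (Fin n) := WithLp.toLp 2 (fun _ => (1:ℝ)) with honesV
  set f : EuclideanSpace ℝ (Fin n) →ₗ[ℝ] (Fin n → ℝ) :=
    (Matrix.mulVecLin Lm).comp (WithLp.linearEquiv 2 ℝ (Fin n → ℝ)).toLinearMap with hf
  set kerL : Submodule ℝ (EuclideanSpace ℝ (Fin n)) := LinearMap.ker f with hker
  have hmemker : ∀ y : EuclideanSpace ℝ (Fin n),
      y ∈ kerL ↔ Lm.mulVec (fun a => y a) = 0 := by
    intro y
    simp [hker, hf, LinearMap.mem_ker, Matrix.mulVecLin_apply]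
  have hinner : ∀ a b : EuclideanSpace ℝ (Fin n),
      (inner ℝ a b : ℝ) = (fun i => a i) ⬝ᵥ (fun i => b i) := by
    intro a b
    simp [PiLp.inner_apply, dotProduct, RCLike.inner_apply, conj_trivial, mul_comm]
  set O : Submodule ℝ (EuclideanSpace ℝ (Fin n)) :=
    (Submodule.span ℝ {onesV})ᗮ with hO
  set K' : Submodule ℝ (EuclideanSpace ℝ (Fin n)) := kerL ⊓ O with hK'
  have honesker : onesV ∈ kerL := by
    rw [hmemker]
    exact hL1
  have honesne : onesV ≠ 0 := by
    intro h
    have := congrArg (fun v : EuclideanSpace ℝ (Fin n) => v ⟨0, by omega⟩) h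
    simp [honesV] at this
  have hVn : finrank ℝ (EuclideanSpace ℝ (Fin n)) = n := finrank_euclideanSpace_fin
  have hOrank : finrank ℝ O = n - 1 := by
    have h1 : finrank ℝ (Submodule.span ℝ {onesV}) = 1 := finrank_span_singleton honesne
    have h2 := Submodule.finrank_add_finrank_orthogonal (Submodule.span ℝ {onesV})
    rw [hVn, h1] at h2
    rw [← hO] at h2
    omega
  have hKerU : ∀ i : Fin n, μ i = 0 → (WithLp.toLp 2 (u i) : EuclideanSpace ℝ (Fin n)) ∈ kerL := by
    intro i hi
    rw [hmemker]
    have := hEig i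
    rw [hi, zero_smul] at this
    exact this
  have hrank : ∀ j : Fin (K-1), μ (idx j) = 0 → (j:ℕ) < finrank ℝ K' := by
    intro j hj
    have hjK : (j:ℕ) < K - 1 := j.isLt
    have hzero : ∀ t : Fin ((j:ℕ)+2), μ ⟨(t:ℕ), by have := t.isLt; omega⟩ = 0 := by
      intro t
      have hle : (⟨(t:ℕ), by have := t.isLt; omega⟩ : Fin n) ≤ idx j := by
        have := t.isLt
        simp only [Fin.le_def, hidx]
        omega
      have := hμ hle
      rw [hj] at this
      exact le_antisymm this (hμ0 _)
    set w : Fin ((j:ℕ)+2) → kerL := fun t =>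
      ⟨WithLp.toLp 2 (u ⟨(t:ℕ), by have := t.isLt; omega⟩), hKerU _ (hzero t)⟩ with hw
    have hwon : Orthonormal ℝ w := by
      rw [orthonormal_iff_ite]
      intro a b
      have : (inner ℝ (w a) (w b) : ℝ) = inner ℝ ((w a : EuclideanSpace ℝ (Fin n))) (w b : EuclideanSpace ℝ (Fin n)) :=
        Submodule.coe_inner _ _ _
      rw [this, hinner]
      have := huu ⟨(a:ℕ), by have := a.isLt; omega⟩ ⟨(b:ℕ), by have := b.isLt; omega⟩
      simp only [hw]
      rw [this]
      congr 1
      simp [Fin.ext_iff]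
    have hcard := hwon.linearIndependent.fintype_card_le_finrank
    simp only [Fintype.card_fin] at hcard
    have hsup := Submodule.finrank_sup_add_finrank_inf_eq kerL O
    have hle : finrank ℝ ↥(kerL ⊔ O) ≤ n := by
      have := Submodule.finrank_le (kerL ⊔ O)
      rwa [hVn] at this
    rw [hOrank] at hsup
    rw [← hK'] at hsup
    omega
  set B := stdOrthonormalBasis ℝ K' with hB
  set x : Fin (K-1) → (Fin n → ℝ) := fun j =>
    if h : μ (idx j) = 0 then (fun i => ((B ⟨(j:ℕ), hrank j h⟩ : ↥K') : EuclideanSpace ℝ (Fin n)) i)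
    else u (idx j) with hx
  have hidxpos : ∀ j : Fin (K-1), μ (idx j) ≠ 0 → 0 < μ (idx j) := fun j h =>
    lt_of_le_of_ne (hμ0 _) (Ne.symm h)
  have hBmem : ∀ a : Fin (finrank ℝ K'), ((B a : ↥K') : EuclideanSpace ℝ (Fin n)) ∈ K' :=
    fun a => (B a).2
  have hBker : ∀ a, ((B a : ↥K') : EuclideanSpace ℝ (Fin n)) ∈ kerL := by
    intro a
    have := hBmem a
    exact (Submodule.mem_inf.mp this).1
  have hBO : ∀ a, ((B a : ↥K') : EuclideanSpace ℝ (Fin n)) ∈ O := by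
    intro a
    have := hBmem a
    exact (Submodule.mem_inf.mp this).2
  have hBdot : ∀ a b, (fun i => ((B a : ↥K') : EuclideanSpace ℝ (Fin n)) i) ⬝ᵥ
      (fun i => ((B b : ↥K') : EuclideanSpace ℝ (Fin n)) i) = if a = b then 1 else 0 := by
    intro a b
    have h1 := (orthonormal_iff_ite.mp B.orthonormal) a b
    rw [Submodule.coe_inner, hinner] at h1
    exact h1
  have hkerdot : ∀ y : EuclideanSpace ℝ (Fin n), y ∈ kerL → ∀ i : Fin n, 0 < μ i →
      (fun a => y a) ⬝ᵥ u i = 0 := by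
    intro y hy i hi
    have h1 : (fun a => y a) ⬝ᵥ (μ i • u i) = 0 := by
      rw [← hEig i, hsymdot]
      rw [hmemker] at hy
      rw [hy]
      simp
    rw [dotProduct_smul, smul_eq_mul] at h1
    exact (mul_eq_zero.mp h1).resolve_left hi.ne'
  have hOdot : ∀ y : EuclideanSpace ℝ (Fin n), y ∈ O →
      (fun a => y a) ⬝ᵥ (fun _ => (1:ℝ)) = 0 := by
    intro y hy
    rw [hO, Submodule.mem_orthogonal_singleton_iff_inner_right] at hy
    rw [hinner] at hy
    rw [← hy]
    exact dotProduct_comm _ _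
  have hidxinj : Function.Injective idx := by
    intro a b hab
    rw [hidx] at hab
    simp only [Fin.mk.injEq] at hab
    exact Fin.ext (by omega)
  refine ⟨x, ?_, ?_, ?_⟩
  · intro j j'
    simp only [hx]
    by_cases h : μ (idx j) = 0 <;> by_cases h' : μ (idx j') = 0
    · rw [dif_pos h, dif_pos h', hBdot]
      by_cases hjj : j = j'
      · subst hjj
        simp
      · rw [if_neg hjj, if_neg (fun hc => hjj (Fin.ext (by
          simpa using congrArg Fin.val hc)))]
    · rw [dif_pos h, dif_neg h', hkerdot _ (hBker _) _ (hidxpos j' h')]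
      rw [if_neg (fun hjj => h' (by rw [← hjj]; exact h))]
    · rw [dif_neg h, dif_pos h', dotProduct_comm,
        hkerdot _ (hBker _) _ (hidxpos j h)]
      rw [if_neg (fun hjj => h (by rw [hjj]; exact h'))]
    · rw [dif_neg h, dif_neg h', huu]
      congr 1
      simp [hidxinj.eq_iff]
  · intro j
    simp only [hx]
    by_cases h : μ (idx j) = 0
    · rw [dif_pos h]
      exact hOdot _ (hBO _)
    · rw [dif_neg h]
      exact hones _ (hidxpos j h)
  · intro j
    simp only [hx]
    by_cases h : μ (idx j) = 0
    · rw [dif_pos h]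
      have h0 : Lm.mulVec (fun i => ((B ⟨(j:ℕ), hrank j h⟩ : ↥K') : EuclideanSpace ℝ (Fin n)) i) = 0 := by
        have := hBker ⟨(j:ℕ), hrank j h⟩
        rwa [hmemker] at this
      rw [h0]
      simp only [dotProduct_zero]
      exact h.symm
    · rw [dif_neg h]
      have : (⟨(j:ℕ)+1, by have := j.isLt; omega⟩ : Fin n) = idx j := rfl
      rw [this, hEig, dotProduct_smul, smul_eq_mul, huu, if_pos rfl, mul_one]

/-- Deterministic upper bound (Case 2 of Theorem 2): for cluster Laplacians `Lₖ`
(symmetric PSD, `Lₖ 1 = 0`, eigenvalues listed increasingly by `μ k` via an orthogonal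
diagonalization) and any `p ≥ 0`, there is a feasible `X ∈ ℝ^{n×(K-1)}` (orthonormal,
centered columns) with
`∑ₖ trace(Xₖᵀ Lₖ Xₖ) + p·∑ₖ (n - nₖ)·trace(Xₖᵀ Xₖ)
  ≤ minₖ [ ∑_{i=2}^{K} λᵢ(Lₖ) + (K-1)·p·(n - nₖ) ]`. -/
theorem stmt9 (K : ℕ) (hK : 2 ≤ K) (nk : Fin K → ℕ) (hnk : ∀ k, K ≤ nk k)
    (L : (k : Fin K) → Matrix (Fin (nk k)) (Fin (nk k)) ℝ)
    (hPSD : ∀ k, (L k).PosSemidef)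
    (hL1 : ∀ k, (L k).mulVec (fun _ => (1 : ℝ)) = 0)
    (μ : (k : Fin K) → Fin (nk k) → ℝ) (hμ : ∀ k, Monotone (μ k))
    (U : (k : Fin K) → Matrix (Fin (nk k)) (Fin (nk k)) ℝ)
    (hU : ∀ k, (U k)ᵀ * U k = 1)
    (hdec : ∀ k, L k = U k * Matrix.diagonal (μ k) * (U k)ᵀ)
    (p : ℝ) (hp : 0 ≤ p) :
    ∃ X : Matrix ((k : Fin K) × Fin (nk k)) (Fin (K - 1)) ℝ,
      Xᵀ * X = 1 ∧
      Xᵀ.mulVec (fun _ => (1 : ℝ)) = 0 ∧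
      ∑ k : Fin K, ((blockOf X k)ᵀ * L k * blockOf X k).trace
          + p * ∑ k : Fin K, (((∑ l : Fin K, nk l : ℕ) : ℝ) - (nk k : ℕ))
              * ((blockOf X k)ᵀ * blockOf X k).trace
        ≤ Finset.univ.inf'
            (Finset.univ_nonempty_iff.mpr (Fin.pos_iff_nonempty.mp (by omega)))
            (fun k =>
              (∑ i ∈ Finset.univ.filter
                  (fun i : Fin (nk k) => 1 ≤ (i : ℕ) ∧ (i : ℕ) < K), μ k i)
                + ((K : ℝ) - 1) * p * (((∑ l : Fin K, nk l : ℕ) : ℝ) - (nk k : ℕ))) := by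
  classical
  obtain ⟨k₀, -, hmin⟩ := Finset.exists_mem_eq_inf'
    (Finset.univ_nonempty_iff.mpr (Fin.pos_iff_nonempty.mp (by omega)))
    (fun k =>
      (∑ i ∈ Finset.univ.filter
          (fun i : Fin (nk k) => 1 ≤ (i : ℕ) ∧ (i : ℕ) < K), μ k i)
        + ((K : ℝ) - 1) * p * (((∑ l : Fin K, nk l : ℕ) : ℝ) - (nk k : ℕ)))
  obtain ⟨x, hxon, hxones, hxL⟩ := core (nk k₀) K hK (hnk k₀) (L k₀) (hPSD k₀)
    (hL1 k₀) (μ k₀) (hμ k₀) (U k₀) (hU k₀) (hdec k₀)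
  set X : Matrix ((k : Fin K) × Fin (nk k)) (Fin (K - 1)) ℝ :=
    Matrix.of (fun q j => if h : q.1 = k₀ then x j (Fin.cast (congrArg nk h) q.2) else 0)
    with hX
  have hXoff : ∀ (k : Fin K), k ≠ k₀ → ∀ (i : Fin (nk k)) (j : Fin (K-1)),
      X ⟨k, i⟩ j = 0 := by
    intro k hk i j
    simp only [hX, Matrix.of_apply]
    exact dif_neg hk
  have hXon : ∀ (i : Fin (nk k₀)) (j : Fin (K-1)), X ⟨k₀, i⟩ j = x j i := by
    intro i j
    have h1 : X ⟨k₀, i⟩ j = x j (Fin.cast (congrArg nk rfl) i) := dif_pos rfl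
    rw [h1]
    exact congrArg (x j) (Fin.ext rfl)
  have hsplit : ∀ f : ((k : Fin K) × Fin (nk k)) → ℝ,
      ∑ q : (k : Fin K) × Fin (nk k), f q = ∑ k : Fin K, ∑ i : Fin (nk k), f ⟨k, i⟩ := by
    intro f
    rw [← Finset.sum_sigma]
    rfl
  have hsigma : ∀ (j j' : Fin (K-1)),
      ∑ q : (k : Fin K) × Fin (nk k), X q j * X q j' = x j ⬝ᵥ x j' := by
    intro j j'
    refine (hsplit _).trans ?_
    rw [Finset.sum_eq_single_of_mem k₀ (Finset.mem_univ _)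
      (fun k _ hk => by
        apply Finset.sum_eq_zero
        intro i _
        rw [hXoff k hk]
        ring)]
    simp only [hXon]
    rfl
  refine ⟨X, ?_, ?_, ?_⟩
  · ext j j'
    rw [Matrix.mul_apply]
    simp only [Matrix.transpose_apply]
    rw [hsigma j j', hxon j j', Matrix.one_apply]
  · funext j
    rw [Matrix.mulVec]
    show (fun q => Xᵀ j q) ⬝ᵥ (fun _ => (1:ℝ)) = 0
    rw [dotProduct]
    have : ∑ q : (k : Fin K) × Fin (nk k), Xᵀ j q * 1 = x j ⬝ᵥ (fun _ => (1:ℝ)) := by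
      refine (hsplit _).trans ?_
      rw [Finset.sum_eq_single_of_mem k₀ (Finset.mem_univ _)
        (fun k _ hk => by
          apply Finset.sum_eq_zero
          intro i _
          rw [Matrix.transpose_apply, hXoff k hk]
          ring)]
      simp only [Matrix.transpose_apply, hXon]
      rfl
    rw [this, hxones]
  · have hBoff : ∀ k, k ≠ k₀ → blockOf X k = 0 := by
      intro k hk
      ext i j
      simp [blockOf, hXoff k hk]
    have hB0 : ∀ (i : Fin (nk k₀)) (j : Fin (K-1)), blockOf X k₀ i j = x j i := by
      intro i j
      simp [blockOf, hXon]
    have hTrL : ∑ k : Fin K, ((blockOf X k)ᵀ * L k * blockOf X k).trace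
        = ∑ j : Fin (K-1), x j ⬝ᵥ (L k₀).mulVec (x j) := by
      rw [Finset.sum_eq_single_of_mem k₀ (Finset.mem_univ _)
        (fun k _ hk => by rw [hBoff k hk]; simp)]
      rw [Matrix.trace]
      apply Finset.sum_congr rfl
      intro j _
      simp only [Matrix.diag_apply, Matrix.mul_apply, Matrix.transpose_apply,
        Matrix.mulVec, dotProduct, hB0, Finset.mul_sum, Finset.sum_mul]
      rw [Finset.sum_comm]
      exact Finset.sum_congr rfl fun i _ => Finset.sum_congr rfl fun l _ => by ring
    have htr2 : ((blockOf X k₀)ᵀ * blockOf X k₀).trace = ((K-1 : ℕ) : ℝ) := by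
      rw [Matrix.trace]
      have hdiag : ∀ j : Fin (K-1), ((blockOf X k₀)ᵀ * blockOf X k₀).diag j = 1 := by
        intro j
        have h1 := hxon j j
        rw [if_pos rfl, dotProduct] at h1
        simp only [Matrix.diag_apply, Matrix.mul_apply, Matrix.transpose_apply, hB0]
        exact h1
      rw [Finset.sum_congr rfl (fun j _ => hdiag j)]
      simp
    have hTr2 : ∑ k : Fin K, (((∑ l : Fin K, nk l : ℕ) : ℝ) - (nk k : ℕ))
          * ((blockOf X k)ᵀ * blockOf X k).trace
        = (((∑ l : Fin K, nk l : ℕ) : ℝ) - (nk k₀ : ℕ)) * ((K-1 : ℕ) : ℝ) := by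
      rw [Finset.sum_eq_single_of_mem k₀ (Finset.mem_univ _)
        (fun k _ hk => by rw [hBoff k hk]; simp)]
      rw [htr2]
    have hre : ∑ j : Fin (K-1), x j ⬝ᵥ (L k₀).mulVec (x j)
        = ∑ i ∈ Finset.univ.filter
            (fun i : Fin (nk k₀) => 1 ≤ (i : ℕ) ∧ (i : ℕ) < K), μ k₀ i := by
      rw [Finset.sum_congr rfl (fun j _ => hxL j)]
      refine Finset.sum_bij'
        (fun (j : Fin (K-1)) (_ : j ∈ Finset.univ) =>
          (⟨(j:ℕ)+1, by have := j.isLt; have := hnk k₀; omega⟩ : Fin (nk k₀)))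
        (fun (a : Fin (nk k₀)) (ha : a ∈ Finset.univ.filter
            (fun i : Fin (nk k₀) => 1 ≤ (i : ℕ) ∧ (i : ℕ) < K)) =>
          (⟨(a:ℕ)-1, by
            have := (Finset.mem_filter.mp ha).2
            omega⟩ : Fin (K-1)))
        (fun a _ => ?_) (fun a _ => Finset.mem_univ _)
        (fun a _ => ?_) (fun a ha => ?_) (fun a _ => rfl)
      · simp only [Finset.mem_filter, Finset.mem_univ, true_and]
        have := a.isLt
        omega
      · exact Fin.ext (by simp)
      · have := (Finset.mem_filter.mp ha).2
        exact Fin.ext (by simp only []; omega)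
    rw [hTrL, hre, hTr2, hmin]
    apply le_of_eq
    rw [Nat.cast_sub (by omega : 1 ≤ K), Nat.cast_one]
    ring
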